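/- Let n ≥ 2 and let v = (v_1, ..., v_{n-1}) be a strictly increasing vector of positive integers. Let r and s be positive integers with r + s - 2 ≤ n - 1, and let x = (x_1, ..., x_s) be a binary vector. Define g_v(r, x) = x_1·v_r - x_s·v_{r+s-2} + Σ_{t=2}^{s-1} x_t·(v_{t+r-1} - v_{t+r-2}). If g_v(r, x) = 0, then x is a constant vector (all zeros or all ones). -/

import Mathlib

def gfun (v : ℕ → ℤ) (r s : ℕ) (x : ℕ → ℤ) : ℤ :=
  x 1 * v r - x s * v (r + s - 2) +
    ∑ t ∈ Finset.Icc 2 (s - 1), x t * (v (t + r - 1) - v (t + r - 2))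

private lemma tele' (r m : ℕ) (v x : ℕ → ℤ) :
    x 1 * v r - x (m + 2) * v (r + m) +
      ∑ i ∈ Finset.range m, x (i + 2) * (v (r + i + 1) - v (r + i))
    = ∑ i ∈ Finset.range (m + 1), (x (i + 1) - x (i + 2)) * v (r + i) := by
  induction m with
  | zero => simp; ring
  | succ k ih =>
    rw [Finset.sum_range_succ, Finset.sum_range_succ (f := fun i => (x (i+1) - x (i+2)) * v (r+i)) (n := k + 1)]
    rw [← ih]
    ring_nf

private lemma key : ∀ (m : ℕ) (y w : ℕ → ℤ),
    (∀ i, i ≤ m + 1 → y i = 0 ∨ y i = 1) →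
    (∀ i, i ≤ m → 0 < w i) →
    (∀ i, i + 1 ≤ m → w i < w (i + 1)) →
    (y (m + 1) = 0 →
      0 ≤ ∑ i ∈ Finset.range (m + 1), (y i - y (i + 1)) * w i ∧
      ((∃ i, i ≤ m + 1 ∧ y i = 1) →
        0 < ∑ i ∈ Finset.range (m + 1), (y i - y (i + 1)) * w i)) ∧
    (y (m + 1) = 1 →
      -w m ≤ ∑ i ∈ Finset.range (m + 1), (y i - y (i + 1)) * w i) := by
  intro m
  induction m with
  | zero =>
    intro y w hy hw hwi
    have h0 := hy 0 (by omega)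
    have hw0 := hw 0 (by omega)
    constructor
    · intro h1
      rw [Finset.sum_range_one, h1]
      rcases h0 with h | h
      · rw [h]
        refine ⟨by norm_num, ?_⟩
        rintro ⟨i, hi, hyi⟩
        have hcase : i = 0 ∨ i = 1 := by omega
        rcases hcase with rfl | rfl
        · rw [h] at hyi; norm_num at hyi
        · rw [h1] at hyi; norm_num at hyi
      · rw [h]
        refine ⟨by linarith, fun _ => by linarith⟩
    · intro h1
      rw [Finset.sum_range_one, h1]
      rcases h0 with h | h <;> rw [h] <;> nlinarith
  | succ k ih =>
    intro y w hy hw hwi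
    obtain ⟨hS0, hS1⟩ := ih y w (fun i hi => hy i (by omega)) (fun i hi => hw i (by omega))
      (fun i hi => hwi i (by omega))
    rw [Finset.sum_range_succ]
    set S := ∑ i ∈ Finset.range (k + 1), (y i - y (i + 1)) * w i with hSdef
    have hyk1 := hy (k + 1) (by omega)
    have hwk := hw k (by omega)
    have hwk1 := hw (k + 1) (by omega)
    have hmono : w k < w (k + 1) := hwi k (by omega)
    constructor
    · intro h2
      rcases hyk1 with h1 | h1
      · obtain ⟨hge, hstr⟩ := hS0 h1
        rw [h1, h2]
        refine ⟨by linarith, ?_⟩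
        rintro ⟨i, hi, hyi⟩
        have hile : i ≤ k + 1 := by
          by_contra hc
          have hik : i = k + 2 := by omega
          rw [hik, h2] at hyi
          norm_num at hyi
        have := hstr ⟨i, hile, hyi⟩
        nlinarith
      · have := hS1 h1
        rw [h1, h2]
        refine ⟨by nlinarith, fun _ => by nlinarith⟩
    · intro h2
      rcases hyk1 with h1 | h1
      · have := (hS0 h1).1
        rw [h1, h2]; nlinarith
      · have := hS1 h1
        rw [h1, h2]; nlinarith

private lemma gfun_eq (r m : ℕ) (v x : ℕ → ℤ) :
    gfun v r (m + 2) x = ∑ i ∈ Finset.range (m + 1), (x (i + 1) - x (i + 2)) * v (r + i) := by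
  rw [← tele', gfun]
  have h1 : r + (m + 2) - 2 = r + m := by omega
  have h2 : m + 2 - 1 = m + 1 := by omega
  rw [h1, h2]
  congr 1
  rw [← Finset.Ico_add_one_right_eq_Icc, Finset.sum_Ico_eq_sum_range]
  have h3 : m + 1 + 1 - 2 = m := by omega
  rw [h3]
  apply Finset.sum_congr rfl
  intro i _
  have e1 : 2 + i + r - 1 = r + i + 1 := by omega
  have e2 : 2 + i + r - 2 = r + i := by omega
  have e3 : 2 + i = i + 2 := by omega
  rw [e1, e2, e3]

theorem stmt0 (n r s : ℕ) (v x : ℕ → ℤ)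
    (hn : 2 ≤ n) (hr : 1 ≤ r) (hs : 1 ≤ s) (hrs : r + s - 2 ≤ n - 1)
    (hpos : ∀ i, 1 ≤ i → i ≤ n - 1 → 0 < v i)
    (hinc : ∀ i j, 1 ≤ i → i < j → j ≤ n - 1 → v i < v j)
    (hbin : ∀ t, 1 ≤ t → t ≤ s → x t = 0 ∨ x t = 1)
    (hg : gfun v r s x = 0) :
    (∀ t, 1 ≤ t → t ≤ s → x t = 0) ∨ (∀ t, 1 ≤ t → t ≤ s → x t = 1) := by
  rcases Nat.lt_or_ge s 2 with hs1 | hs2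
  · -- s = 1
    have hs1 : s = 1 := by omega
    rcases hbin 1 le_rfl (by omega) with h | h
    · left; intro t ht ht'; have : t = 1 := by omega
      rw [this]; exact h
    · right; intro t ht ht'; have : t = 1 := by omega
      rw [this]; exact h
  · obtain ⟨m, rfl⟩ : ∃ m, s = m + 2 := ⟨s - 2, by omega⟩
    set y : ℕ → ℤ := fun i => x (i + 1) with hy
    set w : ℕ → ℤ := fun i => v (r + i) with hw
    have hybin : ∀ i, i ≤ m + 1 → y i = 0 ∨ y i = 1 := fun i hi =>
      hbin (i + 1) (by omega) (by omega)
    have hwpos : ∀ i, i ≤ m → 0 < w i := fun i hi =>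
      hpos (r + i) (by omega) (by omega)
    have hwinc : ∀ i, i + 1 ≤ m → w i < w (i + 1) := by
      intro i hi
      have : r + i < r + (i + 1) := by omega
      exact hinc (r + i) (r + (i + 1)) (by omega) this (by omega)
    have hsum : ∑ i ∈ Finset.range (m + 1), (y i - y (i + 1)) * w i = 0 := by
      rw [← hg, gfun_eq]
    rcases hybin (m + 1) le_rfl with h | h
    · -- all zeros
      left
      have hk := (key m y w hybin hwpos hwinc).1 h
      intro t ht ht'
      by_contra hne
      have he : t - 1 + 1 = t := by omega
      have hyt : y (t - 1) = 1 := by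
        rcases hbin t ht ht' with h' | h'
        · exact absurd h' hne
        · rw [hy]; simp only []; rw [he]; exact h'
      have := hk.2 ⟨t - 1, by omega, hyt⟩
      rw [hsum] at this; exact absurd this (lt_irrefl 0)
    · -- all ones
      right
      set y' : ℕ → ℤ := fun i => 1 - y i with hy'
      have hy'bin : ∀ i, i ≤ m + 1 → y' i = 0 ∨ y' i = 1 := by
        intro i hi
        rcases hybin i hi with h' | h' <;> simp [hy', h']
      have hsum' : ∑ i ∈ Finset.range (m + 1), (y' i - y' (i + 1)) * w i = 0 := by
        have heq : ∑ i ∈ Finset.range (m + 1), (y' i - y' (i + 1)) * w i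
            = -∑ i ∈ Finset.range (m + 1), (y i - y (i + 1)) * w i := by
          rw [← Finset.sum_neg_distrib]
          apply Finset.sum_congr rfl
          intro i _
          simp only [hy']
          ring
        rw [heq, hsum, neg_zero]
      have h' : y' (m + 1) = 0 := by simp [hy', h]
      have hk := (key m y' w hy'bin hwpos hwinc).1 h'
      intro t ht ht'
      by_contra hne
      have he : t - 1 + 1 = t := by omega
      have hyt : y' (t - 1) = 1 := by
        rcases hbin t ht ht' with h'' | h''
        · simp only [hy', hy]
          rw [he, h'']
          ring
        · exact absurd h'' hne
      have := hk.2 ⟨t - 1, by omega, hyt⟩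
      rw [hsum'] at this; exact absurd this (lt_irrefl 0)
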